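/- arXiv:1803.09902 — 2 statements merged into one kernel-verified Lean document; each statement's English description precedes it below -/
import Mathlib

section
/- Let n, d be positive natural numbers, fix a slot i ∈ Fin d, let ε be a skew-Hermitian n×n complex matrix (εᴴ = −ε), let C : (Fin d → Fin n) → ℝ be a real kernel, and let T : (Fin d → Fin n) → ℂ be a tensor. Define the slot-i action of an n×n matrix A on T by (A_i T)_{p} = ∑_{q} A_{p_i q} T_{p_1,…,q,…,p_d} (q replacing the i-th index), and the quadratic form K(T) = ∑_{p} C(p) |T_{p}|². Then the derivative at t = 0 of t ↦ K(exp(tε)_i T) equals ∑_{p,p'} (∏_{j≠i} δ_{p_j p'_j}) conj(T_{p}) (C(p) − C(p')) ε_{p_i p'_i} T_{p'}. -/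
open scoped BigOperators

set_option maxHeartbeats 1000000

attribute [local instance] Matrix.linftyOpNormedRing Matrix.linftyOpNormedAlgebra

/-- Action of a matrix `A` on the `i`-th index slot of a `d`-index tensor. -/
noncomputable def slotAction {n d : ℕ} (i : Fin d) (A : Matrix (Fin n) (Fin n) ℂ)
    (T : (Fin d → Fin n) → ℂ) : (Fin d → Fin n) → ℂ :=
  fun p => ∑ q : Fin n, A (p i) q * T (Function.update p i q)

/-- The quadratic form `K(T) = ∑ₚ C(p) |T_p|²` (with `|z|² = conj z * z`). -/
noncomputable def quadForm {n d : ℕ} (C : (Fin d → Fin n) → ℝ)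
    (T : (Fin d → Fin n) → ℂ) : ℂ :=
  ∑ p : Fin d → Fin n, (C p : ℂ) * (starRingEnd ℂ) (T p) * T p

/-- Variation of the kinetic term under an infinitesimal unitary transformation in
slot `i`: the derivative at `t = 0` of `t ↦ K(exp(tε)ᵢ T)` is given by the
commutator of the kernel `C` with the skew-Hermitian generator `ε`. -/
theorem deriv_quadForm_exp_slotAction (n d : ℕ) (hn : 0 < n) (hd : 0 < d)
    (i : Fin d) (ε : Matrix (Fin n) (Fin n) ℂ) (hε : ε.conjTranspose = -ε)
    (C : (Fin d → Fin n) → ℝ) (T : (Fin d → Fin n) → ℂ) :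
    deriv (fun t : ℝ => quadForm C (slotAction i (NormedSpace.exp (t • ε)) T)) 0
      = ∑ p : Fin d → Fin n, ∑ p' : Fin d → Fin n,
          (∏ j ∈ Finset.univ.filter (fun j : Fin d => j ≠ i),
            (if p j = p' j then (1 : ℂ) else 0)) *
          (starRingEnd ℂ) (T p) * ((C p : ℂ) - (C p' : ℂ)) * ε (p i) (p' i) * T p' := by
  classical
  set E : ℝ → Matrix (Fin n) (Fin n) ℂ := fun t => NormedSpace.exp (t • ε) with hEdef
  -- derivative of the exponential at 0
  have hexp : HasDerivAt E ε 0 := by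
    have h := hasDerivAt_exp_smul_const (𝕂 := ℝ) ε 0
    simp only [zero_smul, NormedSpace.exp_zero, one_mul] at h
    exact h
  have hentry : ∀ a b : Fin n, HasDerivAt (fun t => E t a b) (ε a b) 0 := by
    intro a b
    have hL := (LinearMap.toContinuousLinearMap
      (Matrix.entryLinearMap ℝ ℂ a b)).hasFDerivAt.comp_hasDerivAt 0 hexp
    exact hL
  set D : (Fin d → Fin n) → ℂ :=
    fun p => ∑ q : Fin n, ε (p i) q * T (Function.update p i q) with hDdef
  have hF : ∀ p : Fin d → Fin n,
      HasDerivAt (fun t => slotAction i (E t) T p) (D p) 0 := by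
    intro p
    unfold slotAction
    exact HasDerivAt.fun_sum fun q _ => (hentry (p i) q).mul_const _
  have hF0 : ∀ p : Fin d → Fin n, slotAction i (E 0) T p = T p := by
    intro p
    have h1 : E 0 = 1 := by simp [hEdef]
    simp [slotAction, h1, Matrix.one_apply]
  have hconj : ∀ p : Fin d → Fin n,
      HasDerivAt (fun t => (starRingEnd ℂ) (slotAction i (E t) T p))
        ((starRingEnd ℂ) (D p)) 0 := by
    intro p
    have hL := (Complex.conjCLE.toContinuousLinearMap).hasFDerivAt.comp_hasDerivAt 0 (hF p)
    exact hL
  have hK : HasDerivAt (fun t : ℝ => quadForm C (slotAction i (E t) T))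
      (∑ p : Fin d → Fin n,
        ((C p : ℂ) * (starRingEnd ℂ) (D p) * T p
          + (C p : ℂ) * (starRingEnd ℂ) (T p) * D p)) 0 := by
    unfold quadForm
    refine HasDerivAt.fun_sum fun p _ => ?_
    have h1 : HasDerivAt (fun t => (C p : ℂ) * (starRingEnd ℂ) (slotAction i (E t) T p))
        ((C p : ℂ) * (starRingEnd ℂ) (D p)) 0 := (hconj p).const_mul _
    have h2 := h1.mul (hF p)
    rw [hF0 p] at h2
    exact h2
  rw [hK.deriv]
  -- skew-hermitian entries
  have hce : ∀ a b : Fin n, (starRingEnd ℂ) (ε a b) = - ε b a := by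
    intro a b
    have h := congrFun (congrFun hε b) a
    simpa [Matrix.conjTranspose_apply, Matrix.neg_apply] using h
  -- indicator product
  have hprod : ∀ p p' : Fin d → Fin n,
      (∏ j ∈ Finset.univ.filter (fun j : Fin d => j ≠ i),
        (if p j = p' j then (1 : ℂ) else 0))
      = if ∀ j, j ≠ i → p j = p' j then 1 else 0 := by
    intro p p'
    rw [Finset.prod_boole]
    simp
  -- collapsing the inner sum over p'
  have hinner : ∀ (G : (Fin d → Fin n) → ℂ) (p : Fin d → Fin n),
      (∑ p' : Fin d → Fin n,
        (if ∀ j, j ≠ i → p j = p' j then (1 : ℂ) else 0) * G p')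
      = ∑ q : Fin n, G (Function.update p i q) := by
    intro G p
    have h1 : ∑ q : Fin n, G (Function.update p i q)
        = ∑ p' ∈ Finset.univ.image (Function.update p i),
            (if ∀ j, j ≠ i → p j = p' j then (1 : ℂ) else 0) * G p' := by
      rw [Finset.sum_image (fun a _ b _ h => by simpa using congrFun h i)]
      refine Finset.sum_congr rfl fun q _ => ?_
      rw [if_pos, one_mul]
      intro j hj
      rw [Function.update_of_ne hj]
    rw [h1]
    refine (Finset.sum_subset (Finset.subset_univ _) ?_).symm
    intro p' _ hp'
    rw [if_neg, zero_mul]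
    intro h
    refine hp' (Finset.mem_image.mpr ⟨p' i, Finset.mem_univ _, ?_⟩)
    funext j
    by_cases hj : j = i
    · subst hj; simp
    · rw [Function.update_of_ne hj]; exact h j hj
  -- simplify the RHS
  have hrhs : (∑ p : Fin d → Fin n, ∑ p' : Fin d → Fin n,
          (∏ j ∈ Finset.univ.filter (fun j : Fin d => j ≠ i),
            (if p j = p' j then (1 : ℂ) else 0)) *
          (starRingEnd ℂ) (T p) * ((C p : ℂ) - (C p' : ℂ)) * ε (p i) (p' i) * T p')
      = ∑ p : Fin d → Fin n, ∑ q : Fin n,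
          (starRingEnd ℂ) (T p) * ((C p : ℂ) - (C (Function.update p i q) : ℂ))
            * ε (p i) q * T (Function.update p i q) := by
    refine Finset.sum_congr rfl fun p _ => ?_
    calc (∑ p' : Fin d → Fin n,
          (∏ j ∈ Finset.univ.filter (fun j : Fin d => j ≠ i),
            (if p j = p' j then (1 : ℂ) else 0)) *
          (starRingEnd ℂ) (T p) * ((C p : ℂ) - (C p' : ℂ)) * ε (p i) (p' i) * T p')
        = ∑ p' : Fin d → Fin n,
            (if ∀ j, j ≠ i → p j = p' j then (1 : ℂ) else 0) *
            ((starRingEnd ℂ) (T p) * ((C p : ℂ) - (C p' : ℂ)) * ε (p i) (p' i) * T p') := by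
          refine Finset.sum_congr rfl fun p' _ => ?_
          rw [hprod]; ring
      _ = ∑ q : Fin n, (starRingEnd ℂ) (T p)
            * ((C p : ℂ) - (C (Function.update p i q) : ℂ))
            * ε (p i) ((Function.update p i q) i) * T (Function.update p i q) :=
          hinner _ p
      _ = _ := by
          refine Finset.sum_congr rfl fun q _ => ?_
          rw [Function.update_self]
  rw [hrhs]
  -- the reindexing involution
  have hsig : ∀ f : ((Fin d → Fin n) × Fin n) → ℂ,
      (∑ x : (Fin d → Fin n) × Fin n, f (Function.update x.1 i x.2, x.1 i))
        = ∑ x : (Fin d → Fin n) × Fin n, f x := by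
    intro f
    exact Equiv.sum_comp
      ⟨fun x => (Function.update x.1 i x.2, x.1 i),
       fun x => (Function.update x.1 i x.2, x.1 i),
       by rintro ⟨p, q⟩; simp [Function.update_idem],
       by rintro ⟨p, q⟩; simp [Function.update_idem]⟩ f
  -- expand the first part of the derivative
  have hS1 : (∑ p : Fin d → Fin n, (C p : ℂ) * (starRingEnd ℂ) (D p) * T p)
      = ∑ p : Fin d → Fin n, ∑ q : Fin n,
          -((C (Function.update p i q) : ℂ) * ε (p i) q * (starRingEnd ℂ) (T p)
            * T (Function.update p i q)) := by
    have expand : ∀ p : Fin d → Fin n,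
        (C p : ℂ) * (starRingEnd ℂ) (D p) * T p
        = ∑ q : Fin n, -((C p : ℂ) * ε q (p i)
            * (starRingEnd ℂ) (T (Function.update p i q)) * T p) := by
      intro p
      rw [hDdef]
      simp only [map_sum, map_mul, hce, Finset.mul_sum, Finset.sum_mul]
      refine Finset.sum_congr rfl fun q _ => ?_
      ring
    rw [Finset.sum_congr rfl fun p _ => expand p]
    calc (∑ p : Fin d → Fin n, ∑ q : Fin n, -((C p : ℂ) * ε q (p i)
            * (starRingEnd ℂ) (T (Function.update p i q)) * T p))
        = ∑ x : (Fin d → Fin n) × Fin n, -((C x.1 : ℂ) * ε x.2 (x.1 i)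
            * (starRingEnd ℂ) (T (Function.update x.1 i x.2)) * T x.1) :=
          (Fintype.sum_prod_type' (fun p q => -((C p : ℂ) * ε q (p i)
            * (starRingEnd ℂ) (T (Function.update p i q)) * T p))).symm
      _ = ∑ x : (Fin d → Fin n) × Fin n, (fun y : (Fin d → Fin n) × Fin n =>
            -((C y.1 : ℂ) * ε y.2 (y.1 i)
              * (starRingEnd ℂ) (T (Function.update y.1 i y.2)) * T y.1))
            (Function.update x.1 i x.2, x.1 i) := (hsig _).symm
      _ = ∑ p : Fin d → Fin n, ∑ q : Fin n, (fun y : (Fin d → Fin n) × Fin n =>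
            -((C y.1 : ℂ) * ε y.2 (y.1 i)
              * (starRingEnd ℂ) (T (Function.update y.1 i y.2)) * T y.1))
            (Function.update p i q, p i) :=
          Fintype.sum_prod_type' (f := fun p q => (fun y : (Fin d → Fin n) × Fin n =>
            -((C y.1 : ℂ) * ε y.2 (y.1 i)
              * (starRingEnd ℂ) (T (Function.update y.1 i y.2)) * T y.1))
            (Function.update p i q, p i))
      _ = ∑ p : Fin d → Fin n, ∑ q : Fin n,
            -((C (Function.update p i q) : ℂ) * ε (p i) q * (starRingEnd ℂ) (T p)
              * T (Function.update p i q)) := by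
          refine Finset.sum_congr rfl fun p _ => Finset.sum_congr rfl fun q _ => ?_
          simp [Function.update_idem]
  calc (∑ p : Fin d → Fin n,
        ((C p : ℂ) * (starRingEnd ℂ) (D p) * T p
          + (C p : ℂ) * (starRingEnd ℂ) (T p) * D p))
      = (∑ p : Fin d → Fin n, (C p : ℂ) * (starRingEnd ℂ) (D p) * T p)
        + ∑ p : Fin d → Fin n, (C p : ℂ) * (starRingEnd ℂ) (T p) * D p := by
        rw [Finset.sum_add_distrib]
    _ = (∑ p : Fin d → Fin n, ∑ q : Fin n,
          -((C (Function.update p i q) : ℂ) * ε (p i) q * (starRingEnd ℂ) (T p)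
            * T (Function.update p i q)))
        + ∑ p : Fin d → Fin n, ∑ q : Fin n,
            (C p : ℂ) * (starRingEnd ℂ) (T p) * (ε (p i) q * T (Function.update p i q)) := by
        rw [hS1]
        congr 1
        refine Finset.sum_congr rfl fun p _ => ?_
        rw [hDdef, Finset.mul_sum]
    _ = ∑ p : Fin d → Fin n, ∑ q : Fin n,
          (starRingEnd ℂ) (T p) * ((C p : ℂ) - (C (Function.update p i q) : ℂ))
            * ε (p i) q * T (Function.update p i q) := by
        rw [← Finset.sum_add_distrib]
        refine Finset.sum_congr rfl fun p _ => ?_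
        rw [← Finset.sum_add_distrib]
        refine Finset.sum_congr rfl fun q _ => ?_
        push_cast
        ring
end

section
/- Define, for real m > −1 and real λ with (1+m)² − π²λ ≠ 0, η(m,λ) = 4π²λ / ((1+m)² − π²λ) and β_λ(m,λ) = −2 η(m,λ) λ + (4π²λ² / (1+m)³)(1 + η(m,λ)/6). Then the limit as λ → 0 of β_λ(0,λ)/λ² equals −4π²; in particular there exists δ > 0 such that β_λ(0,λ) < 0 for all 0 < λ < δ (asymptotic freedom near the Gaussian fixed point). -/
open Real Filter

/-- Anomalous dimension of the φ⁴ truncation. -/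
noncomputable def eta (m lam : ℝ) : ℝ :=
  4 * π ^ 2 * lam / ((1 + m) ^ 2 - π ^ 2 * lam)

/-- Beta function of the dimensionless quartic melonic coupling. -/
noncomputable def betaLam (m lam : ℝ) : ℝ :=
  -2 * eta m lam * lam + (4 * π ^ 2 * lam ^ 2 / (1 + m) ^ 3) * (1 + eta m lam / 6)

/-- Asymptotic freedom near the Gaussian fixed point: `β_λ(0,λ)/λ² → −4π²` as
`λ → 0`, and in particular `β_λ(0,λ) < 0` for all sufficiently small `λ > 0`. -/
theorem asymptotic_freedom :
    Tendsto (fun lam : ℝ => betaLam 0 lam / lam ^ 2) (nhdsWithin 0 {0}ᶜ)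
        (nhds (-(4 * π ^ 2))) ∧
      ∃ δ : ℝ, 0 < δ ∧ ∀ lam : ℝ, 0 < lam → lam < δ → betaLam 0 lam < 0 := by
  have hπ : (0:ℝ) < π ^ 2 := by positivity
  set F : ℝ → ℝ := fun lam =>
    -8 * π ^ 2 / (1 - π ^ 2 * lam)
      + 4 * π ^ 2 * (1 + (4 * π ^ 2 * lam / (1 - π ^ 2 * lam)) / 6) with hFdef
  have h1 : Tendsto (fun lam : ℝ => 1 - π ^ 2 * lam) (nhds 0) (nhds 1) := by
    have : Continuous (fun lam : ℝ => 1 - π ^ 2 * lam) := by continuity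
    simpa using this.tendsto 0
  have hFt : Tendsto F (nhds 0) (nhds (-(4 * π ^ 2))) := by
    have ht : Tendsto F (nhds 0)
        (nhds (-8 * π ^ 2 / 1 + 4 * π ^ 2 * (1 + (4 * π ^ 2 * 0 / 1) / 6))) := by
      refine Tendsto.add (tendsto_const_nhds.div h1 one_ne_zero) ?_
      refine tendsto_const_nhds.mul (Tendsto.add tendsto_const_nhds ?_)
      refine Tendsto.div ?_ tendsto_const_nhds (by norm_num)
      refine Tendsto.div (tendsto_const_nhds.mul ?_) h1 one_ne_zero
      exact tendsto_id
    convert ht using 2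
    ring
  have hne : ∀ᶠ lam : ℝ in nhdsWithin 0 {0}ᶜ, (1 - π ^ 2 * lam) ≠ 0 :=
    (h1.eventually_ne one_ne_zero).filter_mono nhdsWithin_le_nhds
  have heq : ∀ᶠ lam : ℝ in nhdsWithin 0 {0}ᶜ, betaLam 0 lam / lam ^ 2 = F lam := by
    filter_upwards [hne, self_mem_nhdsWithin] with lam hd (hl : lam ≠ 0)
    simp only [betaLam, eta, hFdef]
    have h10 : ((1:ℝ) + 0) ^ 2 - π ^ 2 * lam = 1 - π ^ 2 * lam := by ring
    rw [h10]
    field_simp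
    ring
  have hT : Tendsto (fun lam : ℝ => betaLam 0 lam / lam ^ 2) (nhdsWithin 0 {0}ᶜ)
      (nhds (-(4 * π ^ 2))) :=
    (hFt.mono_left nhdsWithin_le_nhds).congr' (EventuallyEq.symm heq)
  refine ⟨hT, ?_⟩
  have hneg : ∀ᶠ lam : ℝ in nhdsWithin 0 {0}ᶜ, betaLam 0 lam / lam ^ 2 < 0 :=
    hT.eventually (gt_mem_nhds (by nlinarith : -(4 * π ^ 2) < 0))
  obtain ⟨ε, hε, hsub⟩ := Metric.mem_nhdsWithin_iff.mp hneg
  refine ⟨ε, hε, fun lam hl hle => ?_⟩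
  have hmem : lam ∈ Metric.ball (0:ℝ) ε ∩ {0}ᶜ := by
    constructor
    · rw [Metric.mem_ball, Real.dist_eq, sub_zero, abs_of_pos hl]; exact hle
    · simpa using ne_of_gt hl
  have hlt : betaLam 0 lam / lam ^ 2 < 0 := hsub hmem
  have hsq : (0:ℝ) < lam ^ 2 := by positivity
  rcases div_neg_iff.mp hlt with ⟨_, h2⟩ | ⟨h2, _⟩
  · linarith
  · exact h2
end
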